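/- Let $\lambda = \rho e^{i\eta}$ with $\rho > 1$ and $\eta \in (\pi/2, \pi)$, let $\Delta$ denote the Laplacian, and let $R(\lambda,\Delta) = (\lambda\,\mathrm{Id} - \Delta)^{-1}$ be the resolvent. Then for every $\epsilon \in (0,1/2)$ there exists a constant $C = C_\eta$ (independent of $\rho$) such that for all $h \in H^m(\mathbb{R}^d)$, $\|\nabla R(\rho e^{i\eta}, \Delta) h\|_{m-2\epsilon}^2 \le C_\eta \, \rho^{-(1+2\epsilon)} \|h\|_m^2$. -/

import Mathlib

open MeasureTheory
open scoped ENNReal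

lemma absSq_eval (η ρ x : ℝ) :
    ‖(ρ:ℂ) * Complex.exp ((η:ℂ) * Complex.I) + (x:ℂ)‖ ^ 2
      = (ρ * Real.cos η + x)^2 + (ρ * Real.sin η)^2 := by
  rw [Complex.sq_norm, Complex.normSq_apply]
  simp [Complex.add_re, Complex.add_im, Complex.mul_re, Complex.mul_im,
    Complex.exp_ofReal_mul_I_re, Complex.exp_ofReal_mul_I_im]
  ring

lemma aux1 (ε ρ x : ℝ) (hε : 0 < ε) (hε2 : ε < 1/2) (hρ : 1 < ρ) (hx : 0 ≤ x) :
    x / (ρ + x)^2 ≤ (1+x)^(2*ε) / ρ^(1+2*ε) := by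
  have ha0 : (0:ℝ) < ρ + x := by linarith
  have hb : (0:ℝ) < 1 + x := by linarith
  have hxle : x ≤ (ρ+x)^(1-2*ε) * (1+x)^(2*ε) := by
    rcases eq_or_lt_of_le hx with h | h
    · rw [← h]; positivity
    · calc x = x^((1-2*ε)+2*ε) := by rw [show (1-2*ε)+2*ε = 1 by ring, Real.rpow_one]
        _ = x^(1-2*ε) * x^(2*ε) := Real.rpow_add h _ _
        _ ≤ (ρ+x)^(1-2*ε) * (1+x)^(2*ε) := by
            apply mul_le_mul
            · exact Real.rpow_le_rpow hx (by linarith) (by linarith)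
            · exact Real.rpow_le_rpow hx (by linarith) (by positivity)
            · positivity
            · positivity
  have key : (ρ+x)^(1-2*ε) * (ρ+x)^(1+2*ε) = (ρ+x)^2 := by
    rw [← Real.rpow_add ha0, show (1-2*ε)+(1+2*ε) = 2 by ring, Real.rpow_two]
  calc x/(ρ+x)^2 ≤ ((ρ+x)^(1-2*ε) * (1+x)^(2*ε))/(ρ+x)^2 := by gcongr
    _ = (1+x)^(2*ε) / (ρ+x)^(1+2*ε) := by
        have h1 : (0:ℝ) < (ρ+x)^(1+2*ε) := Real.rpow_pos_of_pos ha0 _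
        field_simp
        linear_combination key
    _ ≤ (1+x)^(2*ε) / ρ^(1+2*ε) := by
        have h1 : (0:ℝ) < ρ^(1+2*ε) := Real.rpow_pos_of_pos (by linarith) _
        have h2 : ρ^(1+2*ε) ≤ (ρ+x)^(1+2*ε) :=
          Real.rpow_le_rpow (by linarith) (by linarith) (by positivity)
        gcongr


lemma aux2 (η ρ x : ℝ) (hη : η ∈ Set.Ioo (Real.pi / 2) Real.pi) (hρ : 1 < ρ) (hx : 0 ≤ x) :
    (1 + Real.cos η) / 2 * (ρ + x)^2 ≤
      ‖(ρ:ℂ) * Complex.exp ((η:ℂ) * Complex.I) + (x:ℂ)‖ ^ 2 := by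
  rw [absSq_eval]
  have hc0 : Real.cos η < 0 := by
    have := Real.cos_lt_cos_of_nonneg_of_le_pi (le_of_lt (by positivity)) hη.2.le hη.1
    simpa [Real.cos_pi_div_two] using this
  have hc1 : -1 < Real.cos η := by
    have := Real.cos_lt_cos_of_nonneg_of_le_pi
      (le_of_lt (lt_trans (by positivity) hη.1)) le_rfl hη.2
    simpa [Real.cos_pi] using this
  have hs := Real.sin_sq_add_cos_sq η
  nlinarith [sq_nonneg (ρ - x), sq_nonneg (ρ + x), mul_pos (lt_trans zero_lt_one hρ) (lt_trans zero_lt_one hρ)]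

lemma aux3 (η ρ x ε : ℝ) (hη : η ∈ Set.Ioo (Real.pi / 2) Real.pi)
    (hε : 0 < ε) (hε2 : ε < 1/2) (hρ : 1 < ρ) (hx : 0 ≤ x) :
    x / ‖(ρ:ℂ) * Complex.exp ((η:ℂ) * Complex.I) + (x:ℂ)‖ ^ 2
      ≤ (2 / (1 + Real.cos η)) / ρ ^ (1 + 2*ε) * (1 + x) ^ (2*ε) := by
  have hc1 : -1 < Real.cos η := by
    have := Real.cos_lt_cos_of_nonneg_of_le_pi
      (le_of_lt (lt_trans (by positivity) hη.1)) le_rfl hη.2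
    simpa [Real.cos_pi] using this
  have hc : (0:ℝ) < 1 + Real.cos η := by linarith
  have ha0 : (0:ℝ) < ρ + x := by linarith
  have hB : (0:ℝ) < (1 + Real.cos η) / 2 * (ρ + x)^2 := by positivity
  have h2 := aux2 η ρ x hη hρ hx
  calc x / ‖(ρ:ℂ) * Complex.exp ((η:ℂ) * Complex.I) + (x:ℂ)‖ ^ 2
      ≤ x / ((1 + Real.cos η) / 2 * (ρ + x)^2) := by gcongr
    _ = (2 / (1 + Real.cos η)) * (x / (ρ + x)^2) := by
        field_simp
    _ ≤ (2 / (1 + Real.cos η)) * ((1+x)^(2*ε) / ρ^(1+2*ε)) := by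
        exact mul_le_mul_of_nonneg_left (aux1 ε ρ x hε hε2 hρ hx) (by positivity)
    _ = (2 / (1 + Real.cos η)) / ρ ^ (1 + 2*ε) * (1 + x) ^ (2*ε) := by ring

/-- Resolvent estimate for the Laplacian on the Fourier side: the resolvent
`R(ρe^{iη}, Δ)` acts as the multiplier `(ρe^{iη} + |ξ|²)⁻¹` and `∇` as multiplication
by `iξ`, so `‖∇R(ρe^{iη},Δ)h‖²_{m-2ε} ≤ C_η ρ^{-(1+2ε)} ‖h‖²_m`, stated here as the
corresponding inequality between the Fourier-side integrals for any Fourier datum `H = 𝓕h`. -/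
theorem stmt2 (d : ℕ) (m η : ℝ) (hη : η ∈ Set.Ioo (Real.pi / 2) Real.pi) :
    ∀ ε : ℝ, ε ∈ Set.Ioo (0 : ℝ) (1 / 2) →
    ∃ C : ℝ, 0 < C ∧ ∀ ρ : ℝ, 1 < ρ →
      ∀ H : EuclideanSpace ℝ (Fin d) → ℂ,
        (∫⁻ ξ : EuclideanSpace ℝ (Fin d),
            ENNReal.ofReal ((1 + ‖ξ‖ ^ 2) ^ (m - 2 * ε) *
              (‖ξ‖ ^ 2 * ‖H ξ‖ ^ 2 /
                ‖(ρ * Complex.exp (η * Complex.I) + (‖ξ‖ : ℂ) ^ 2 : ℂ)‖ ^ 2)))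
          ≤ ENNReal.ofReal (C / ρ ^ (1 + 2 * ε)) *
            ∫⁻ ξ : EuclideanSpace ℝ (Fin d),
              ENNReal.ofReal ((1 + ‖ξ‖ ^ 2) ^ m * ‖H ξ‖ ^ 2) := by
  intro ε hε
  have hc1 : -1 < Real.cos η := by
    have := Real.cos_lt_cos_of_nonneg_of_le_pi
      (le_of_lt (lt_trans (by positivity) hη.1)) le_rfl hη.2
    simpa [Real.cos_pi] using this
  have hc : (0:ℝ) < 1 + Real.cos η := by linarith
  refine ⟨2 / (1 + Real.cos η), by positivity, ?_⟩
  intro ρ hρ H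
  set C : ℝ := 2 / (1 + Real.cos η) with hC
  have hCpos : 0 < C := by positivity
  have hconst : 0 ≤ C / ρ ^ (1 + 2 * ε) := by positivity
  calc (∫⁻ ξ : EuclideanSpace ℝ (Fin d),
            ENNReal.ofReal ((1 + ‖ξ‖ ^ 2) ^ (m - 2 * ε) *
              (‖ξ‖ ^ 2 * ‖H ξ‖ ^ 2 /
                ‖(ρ * Complex.exp (η * Complex.I) + (‖ξ‖ : ℂ) ^ 2 : ℂ)‖ ^ 2)))
      ≤ ∫⁻ ξ : EuclideanSpace ℝ (Fin d),
          ENNReal.ofReal (C / ρ ^ (1 + 2 * ε)) *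
            ENNReal.ofReal ((1 + ‖ξ‖ ^ 2) ^ m * ‖H ξ‖ ^ 2) := by
        apply lintegral_mono
        intro ξ
        dsimp only
        rw [← ENNReal.ofReal_mul hconst]
        apply ENNReal.ofReal_le_ofReal
        set x : ℝ := ‖ξ‖ ^ 2 with hxdef
        have hx : 0 ≤ x := by positivity
        have hb : (0:ℝ) < 1 + x := by linarith
        have hcast : ((‖ξ‖ : ℂ)) ^ 2 = ((x : ℝ) : ℂ) := by
          rw [hxdef]; push_cast; ring
        have hkey : x / ‖(ρ:ℂ) * Complex.exp ((η:ℂ) * Complex.I) + (x:ℂ)‖ ^ 2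
            ≤ C / ρ ^ (1 + 2*ε) * (1 + x) ^ (2*ε) :=
          aux3 η ρ x ε hη hε.1 hε.2 hρ hx
        rw [hcast]
        set A : ℝ := ‖(ρ:ℂ) * Complex.exp ((η:ℂ) * Complex.I) + ((x:ℝ):ℂ)‖ ^ 2
        have hA : 0 ≤ A := by positivity
        have hh : (0:ℝ) ≤ ‖H ξ‖ ^ 2 := by positivity
        calc (1 + x) ^ (m - 2 * ε) * (x * ‖H ξ‖ ^ 2 / A)
            = (1 + x) ^ (m - 2 * ε) * ((x / A) * ‖H ξ‖ ^ 2) := by ring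
          _ ≤ (1 + x) ^ (m - 2 * ε) * ((C / ρ ^ (1 + 2*ε) * (1 + x) ^ (2*ε)) * ‖H ξ‖ ^ 2) := by
              apply mul_le_mul_of_nonneg_left _ (by positivity)
              exact mul_le_mul_of_nonneg_right hkey hh
          _ = C / ρ ^ (1 + 2*ε) * (((1 + x) ^ (m - 2 * ε) * (1 + x) ^ (2*ε)) * ‖H ξ‖ ^ 2) := by
              ring
          _ = C / ρ ^ (1 + 2 * ε) * ((1 + x) ^ m * ‖H ξ‖ ^ 2) := by
              rw [← Real.rpow_add hb]
              ring_nf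
    _ = ENNReal.ofReal (C / ρ ^ (1 + 2 * ε)) *
          ∫⁻ ξ : EuclideanSpace ℝ (Fin d),
            ENNReal.ofReal ((1 + ‖ξ‖ ^ 2) ^ m * ‖H ξ‖ ^ 2) :=
        lintegral_const_mul' _ _ ENNReal.ofReal_ne_top
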